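/- Let K be a differential field of characteristic zero, let p ∈ K[y] be an ordinary polynomial in y (involving no proper derivatives of y), and let f = y' + p(y) ∈ K{y}. Then the composite map K[y] ↪ K{y} → K{y}/[f] is an isomorphism of K-algebras. In particular, every element of K{y} is congruent modulo the differential ideal [f] to a unique ordinary polynomial in K[y], and [f] is a proper prime differential ideal of K{y}. -/

import Mathlib

open MvPolynomial

section Aux
variable {K : Type*} [CommRing K] (dK : K → K)

/-- Coefficient-wise application of `dK` to a polynomial. -/
noncomputable def cmAux (q : Polynomial K) : Polynomial K :=
  q.sum fun n a => Polynomial.monomial n (dK a)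

variable (hdK_add : ∀ a b : K, dK (a + b) = dK a + dK b)
  (hdK_mul : ∀ a b : K, dK (a * b) = a * dK b + dK a * b)

include hdK_add in
lemma dK_zeroAux : dK 0 = 0 := by
  have := hdK_add 0 0; simpa using this

include hdK_add in
lemma cmAux_monomial (n : ℕ) (a : K) :
    cmAux dK (Polynomial.monomial n a) = Polynomial.monomial n (dK a) := by
  unfold cmAux
  rw [Polynomial.sum_monomial_index]
  rw [dK_zeroAux dK hdK_add, Polynomial.monomial_zero_right]

include hdK_add in
lemma cmAux_add (q r : Polynomial K) :
    cmAux dK (q + r) = cmAux dK q + cmAux dK r := by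
  unfold cmAux
  rw [Polynomial.sum_add_index]
  · intro i; rw [dK_zeroAux dK hdK_add, Polynomial.monomial_zero_right]
  · intro n a b; rw [hdK_add, map_add (Polynomial.monomial n)]

include hdK_add in
lemma cmAux_C (c : K) : cmAux dK (Polynomial.C c) = Polynomial.C (dK c) := by
  rw [← Polynomial.monomial_zero_left, cmAux_monomial dK hdK_add,
    Polynomial.monomial_zero_left]

include hdK_add hdK_mul in
lemma cmAux_X : cmAux dK (Polynomial.X : Polynomial K) = 0 := by
  have h1 : dK 1 = 0 := by have := hdK_mul 1 1; simpa using this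
  rw [← Polynomial.monomial_one_one_eq_X, cmAux_monomial dK hdK_add, h1,
    Polynomial.monomial_zero_right]

include hdK_add hdK_mul in
lemma cmAux_mul (q r : Polynomial K) :
    cmAux dK (q * r) = q * cmAux dK r + cmAux dK q * r := by
  induction q using Polynomial.induction_on' with
  | add a b ha hb =>
    rw [add_mul, cmAux_add dK hdK_add, ha, hb, cmAux_add dK hdK_add]; ring
  | monomial m a =>
    induction r using Polynomial.induction_on' with
    | add c d hc hd =>
      rw [mul_add, cmAux_add dK hdK_add, hc, hd, cmAux_add dK hdK_add]; ring
    | monomial n b =>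
      rw [Polynomial.monomial_mul_monomial, cmAux_monomial dK hdK_add,
        cmAux_monomial dK hdK_add, cmAux_monomial dK hdK_add, hdK_mul,
        map_add (Polynomial.monomial (m + n)), Polynomial.monomial_mul_monomial,
        Polynomial.monomial_mul_monomial]

end Aux

/-- The smallest differential ideal (ideal closed under `D`) containing the set `S`. -/
def diffIdealGen {R : Type*} [CommRing R] (D : R → R) (S : Set R) : Ideal R :=
  sInf {I : Ideal R | S ⊆ I ∧ ∀ x ∈ I, D x ∈ I}

/-- **`K{y}/[y' + p(y)] ≅ K[y]`.**  Let `K` be a differential field of characteristic zero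
with derivation `dK`, let `p ∈ K[y]` be an ordinary polynomial, and let `f = y' + p(y)` in
the differential polynomial ring `K{y}`, modelled as `MvPolynomial ℕ K` with `X j` playing
the role of `y^{(j)}` and `D` the unique derivation extending `dK` with
`y^{(j)} ↦ y^{(j+1)}`.  Then the composite `K[y] ↪ K{y} → K{y}/[f]` (where the first map
sends `y ↦ y^{(0)}`) is an isomorphism of `K`-algebras; in particular every element of
`K{y}` is congruent modulo `[f]` to a unique ordinary polynomial in `K[y]`, and `[f]` is a
proper prime differential ideal of `K{y}`. -/
theorem quotient_by_first_order_differential_polynomial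
    {K : Type*} [Field K] [CharZero K] (dK : K → K)
    (hdK_add : ∀ a b : K, dK (a + b) = dK a + dK b)
    (hdK_mul : ∀ a b : K, dK (a * b) = a * dK b + dK a * b)
    (D : MvPolynomial ℕ K → MvPolynomial ℕ K)
    (hD_add : ∀ p q, D (p + q) = D p + D q)
    (hD_mul : ∀ p q, D (p * q) = p * D q + D p * q)
    (hD_C : ∀ c : K, D (MvPolynomial.C c) = MvPolynomial.C (dK c))
    (hD_X : ∀ j : ℕ, D (X j) = X (j + 1))
    (p : Polynomial K) :
    Function.Bijective
      ((Ideal.Quotient.mkₐ K (diffIdealGen D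
          {X 1 + Polynomial.aeval (X 0 : MvPolynomial ℕ K) p})).comp
        (Polynomial.aeval (X 0 : MvPolynomial ℕ K) : Polynomial K →ₐ[K] MvPolynomial ℕ K)) ∧
    (diffIdealGen D {X 1 + Polynomial.aeval (X 0 : MvPolynomial ℕ K) p}).IsPrime := by
  set f : MvPolynomial ℕ K := X 1 + Polynomial.aeval (X 0 : MvPolynomial ℕ K) p with hf
  set I : Ideal (MvPolynomial ℕ K) := diffIdealGen D {f} with hI
  -- The induced derivation on `K[y]` after substituting `y' ↦ -p(y)`.
  set del : Polynomial K → Polynomial K :=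
    fun q => Polynomial.derivative q * (-p) + cmAux dK q with hdel
  have del_add : ∀ q r, del (q + r) = del q + del r := by
    intro q r
    simp only [hdel, map_add, cmAux_add dK hdK_add]; ring
  have del_mul : ∀ q r, del (q * r) = q * del r + del q * r := by
    intro q r
    simp only [hdel, Polynomial.derivative_mul, cmAux_mul dK hdK_add hdK_mul]; ring
  have del_C : ∀ c : K, del (Polynomial.C c) = Polynomial.C (dK c) := by
    intro c
    simp only [hdel, Polynomial.derivative_C, cmAux_C dK hdK_add]; ring
  have del_X : del Polynomial.X = -p := by
    simp only [hdel, Polynomial.derivative_X, cmAux_X dK hdK_add hdK_mul]; ring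
  have del_zero : del 0 = 0 := by
    have := del_add 0 0; simpa using this.symm
  -- The sequence of "derivatives of y" in `K[y]`.
  set g : ℕ → Polynomial K := fun n => Nat.rec Polynomial.X (fun _ ih => del ih) n with hg
  have g0 : g 0 = Polynomial.X := rfl
  have gs : ∀ n, g (n + 1) = del (g n) := fun n => rfl
  -- The retraction `K{y} → K[y]`.
  set ψ : MvPolynomial ℕ K →ₐ[K] Polynomial K := MvPolynomial.aeval g with hψ
  have ψX : ∀ n, ψ (X n) = g n := fun n => MvPolynomial.aeval_X g n
  have ψC : ∀ c : K, ψ (MvPolynomial.C c) = Polynomial.C c := by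
    intro c; rw [hψ, MvPolynomial.aeval_C, Polynomial.algebraMap_eq]
  -- `ψ` intertwines `D` and `del`.
  have ψD : ∀ x, ψ (D x) = del (ψ x) := by
    intro x
    induction x using MvPolynomial.induction_on with
    | C c => rw [hD_C, ψC, ψC, del_C]
    | add a b ha hb => rw [hD_add, map_add, ha, hb, map_add, del_add]
    | mul_X q n hq =>
      rw [hD_mul, map_add, map_mul, map_mul, hD_X, ψX, ψX, gs, hq, map_mul, ψX, del_mul]
  have ψf : ψ f = 0 := by
    rw [hf, map_add, ψX, show g 1 = del Polynomial.X from rfl, del_X,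
      ← Polynomial.aeval_algHom_apply ψ (X 0 : MvPolynomial ℕ K) p, ψX, g0,
      Polynomial.aeval_X_left_apply]
    ring
  -- basic membership facts about `I`
  have hfI : f ∈ I := by
    rw [hI, diffIdealGen]
    exact Submodule.mem_sInf.mpr fun J hJ => hJ.1 rfl
  have hDI : ∀ x ∈ I, D x ∈ I := by
    intro x hx
    rw [hI, diffIdealGen, Submodule.mem_sInf] at *
    exact fun J hJ => hJ.2 x (hx J hJ)
  have hDsub : ∀ a b, D (a - b) = D a - D b := by
    intro a b
    have := hD_add (a - b) b
    rw [sub_add_cancel] at this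
    exact eq_sub_of_add_eq this.symm
  -- `I ≤ ker ψ`
  have hIker : I ≤ RingHom.ker (ψ : MvPolynomial ℕ K →+* Polynomial K) := by
    rw [hI, diffIdealGen]
    refine sInf_le ⟨?_, ?_⟩
    · intro x hx
      rw [Set.mem_singleton_iff] at hx
      subst hx
      exact RingHom.mem_ker.mpr ψf
    · intro x hx
      rw [RingHom.mem_ker] at *
      rw [show (ψ : MvPolynomial ℕ K →+* Polynomial K) (D x) = ψ (D x) from rfl, ψD,
        show (ψ : MvPolynomial ℕ K →+* Polynomial K) x = ψ x from rfl] at *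
      rw [hx, del_zero]
  -- key computation: `D` of a polynomial in `y` is `del` of it, modulo `I`
  have keyMul : ∀ q r : Polynomial K,
      D (Polynomial.aeval (X 0 : MvPolynomial ℕ K) q) - Polynomial.aeval (X 0) (del q) ∈ I →
      D (Polynomial.aeval (X 0 : MvPolynomial ℕ K) r) - Polynomial.aeval (X 0) (del r) ∈ I →
      D (Polynomial.aeval (X 0 : MvPolynomial ℕ K) (q * r))
        - Polynomial.aeval (X 0) (del (q * r)) ∈ I := by
    intro q r hq hr
    have := I.add_mem (I.mul_mem_left (Polynomial.aeval (X 0 : MvPolynomial ℕ K) q) hr)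
      (I.mul_mem_right (Polynomial.aeval (X 0 : MvPolynomial ℕ K) r) hq)
    convert this using 1
    rw [map_mul, hD_mul, del_mul, map_add, map_mul, map_mul]
    ring
  have keyX : D (Polynomial.aeval (X 0 : MvPolynomial ℕ K) (Polynomial.X : Polynomial K))
      - Polynomial.aeval (X 0) (del Polynomial.X) ∈ I := by
    rw [Polynomial.aeval_X, hD_X, del_X, map_neg, sub_neg_eq_add]
    simpa [hf] using hfI
  have keyL : ∀ q : Polynomial K,
      D (Polynomial.aeval (X 0 : MvPolynomial ℕ K) q) - Polynomial.aeval (X 0) (del q) ∈ I := by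
    intro q
    induction q using Polynomial.induction_on with
    | C a =>
      rw [Polynomial.aeval_C, del_C, Polynomial.aeval_C]
      rw [show (algebraMap K (MvPolynomial ℕ K)) a = MvPolynomial.C a from rfl,
        show (algebraMap K (MvPolynomial ℕ K)) (dK a) = MvPolynomial.C (dK a) from rfl,
        hD_C, sub_self]
      exact I.zero_mem
    | add a b ha hb =>
      have := I.add_mem ha hb
      convert this using 1
      rw [map_add, hD_add, del_add, map_add]
      ring
    | monomial n a h =>
      rw [pow_succ, ← mul_assoc]
      exact keyMul _ _ h keyX
  -- every `X n` is congruent to `g n` mod `I`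
  have keyN : ∀ n : ℕ, (X n : MvPolynomial ℕ K) - Polynomial.aeval (X 0) (g n) ∈ I := by
    intro n
    induction n with
    | zero => rw [g0, Polynomial.aeval_X, sub_self]; exact I.zero_mem
    | succ n ih =>
      have h1 : D ((X n : MvPolynomial ℕ K) - Polynomial.aeval (X 0) (g n)) ∈ I := hDI _ ih
      rw [hDsub, hD_X] at h1
      have := I.add_mem h1 (keyL (g n))
      convert this using 1
      rw [gs]; ring
  -- every element is congruent to an ordinary polynomial mod `I`
  have keyM : ∀ x : MvPolynomial ℕ K, x - Polynomial.aeval (X 0) (ψ x) ∈ I := by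
    intro x
    induction x using MvPolynomial.induction_on with
    | C c =>
      rw [ψC, Polynomial.aeval_C,
        show (algebraMap K (MvPolynomial ℕ K)) c = MvPolynomial.C c from rfl, sub_self]
      exact I.zero_mem
    | add a b ha hb =>
      have := I.add_mem ha hb
      convert this using 1
      rw [map_add, map_add]
      ring
    | mul_X q n hq =>
      have := I.add_mem (I.mul_mem_left q (keyN n))
        (I.mul_mem_right (Polynomial.aeval (X 0 : MvPolynomial ℕ K) (g n)) hq)
      convert this using 1
      rw [map_mul, ψX, map_mul]
      ring
  have hkerI : RingHom.ker (ψ : MvPolynomial ℕ K →+* Polynomial K) ≤ I := by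
    intro x hx
    have h := keyM x
    rw [RingHom.mem_ker] at hx
    rw [show (ψ : MvPolynomial ℕ K →+* Polynomial K) x = ψ x from rfl] at hx
    rwa [hx, map_zero, sub_zero] at h
  have hIeq : I = RingHom.ker (ψ : MvPolynomial ℕ K →+* Polynomial K) :=
    le_antisymm hIker hkerI
  have hψsec : ∀ q : Polynomial K, ψ (Polynomial.aeval (X 0 : MvPolynomial ℕ K) q) = q := by
    intro q
    rw [← Polynomial.aeval_algHom_apply ψ (X 0 : MvPolynomial ℕ K) q, ψX, g0,
      Polynomial.aeval_X_left_apply]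
  constructor
  · -- bijectivity via the explicit inverse induced by `ψ`
    have hI0 : ∀ a ∈ I, ψ a = 0 := by
      intro a ha
      exact RingHom.mem_ker.mp (hIker ha)
    set ψbar : (MvPolynomial ℕ K ⧸ I) →ₐ[K] Polynomial K :=
      Ideal.Quotient.liftₐ I ψ hI0 with hψbar
    have hbar : ∀ y, ψbar (Ideal.Quotient.mkₐ K I y) = ψ y := fun y =>
      AlgHom.congr_fun (Ideal.Quotient.liftₐ_comp I ψ hI0) y
    refine Function.bijective_iff_has_inverse.mpr ⟨ψbar, ?_, ?_⟩
    · intro q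
      rw [AlgHom.comp_apply, hbar, hψsec]
    · intro z
      obtain ⟨x, rfl⟩ := Ideal.Quotient.mk_surjective z
      rw [show (Ideal.Quotient.mk I) x = Ideal.Quotient.mkₐ K I x from rfl, hbar,
        AlgHom.comp_apply]
      rw [show Ideal.Quotient.mkₐ K I (Polynomial.aeval (X 0 : MvPolynomial ℕ K) (ψ x))
          = Ideal.Quotient.mk I (Polynomial.aeval (X 0 : MvPolynomial ℕ K) (ψ x)) from rfl,
        show Ideal.Quotient.mkₐ K I x = Ideal.Quotient.mk I x from rfl]
      exact Ideal.Quotient.eq.mpr (by simpa [neg_sub] using I.neg_mem (keyM x))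
  · rw [hIeq]
    exact RingHom.ker_isPrime _
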